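/- For every α with 0 < α < 1 there is a constant C(α) such that for any bounded measurable function ω supported in [-D, D] with D ≥ 1, ‖ω‖_∞ ≤ 1, and finite Hölder seminorm ‖ω‖_{C^α}, the principal value Hilbert transform satisfies |p.v. ∫ ω(y)/(x−y) dy| ≤ C(α)(1 + log D + log(1 + ‖ω‖_{C^α})) for all x ∈ ℝ. -/

import Mathlib

open MeasureTheory Set

/- ### Auxiliary lemmas -/

lemma HT.annulus_eq (x a b : ℝ) (ha : 0 < a) :
    {y : ℝ | a ≤ |x - y| ∧ |x - y| ≤ b} = Icc (x-b) (x-a) ∪ Icc (x+a) (x+b) := by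
  ext y
  simp only [mem_setOf_eq, mem_union, mem_Icc]
  constructor
  · rintro ⟨h1, h2⟩
    rcases le_total y x with h | h
    · left
      rw [abs_of_nonneg (by linarith)] at h1 h2
      constructor <;> linarith
    · right
      rw [abs_of_nonpos (by linarith)] at h1 h2
      constructor <;> linarith
  · rintro (⟨h1, h2⟩ | ⟨h1, h2⟩)
    · rw [abs_of_nonneg (by linarith)]; constructor <;> linarith
    · rw [abs_of_nonpos (by linarith)]; constructor <;> linarith

lemma HT.intOn_bounded {f : ℝ → ℝ} {s : Set ℝ} {c d M : ℝ} (hs : MeasurableSet s)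
    (hsub : s ⊆ Icc c d) (hm : Measurable f) (hM : ∀ y ∈ s, |f y| ≤ M) :
    IntegrableOn f s := by
  refine Measure.integrableOn_of_bounded (M := M) ?_ hm.aestronglyMeasurable ?_
  · exact ne_of_lt (lt_of_le_of_lt (measure_mono hsub)
      (by rw [Real.volume_Icc]; exact ENNReal.ofReal_lt_top))
  · exact ae_restrict_of_forall_mem hs (by simpa [Real.norm_eq_abs] using hM)

lemma HT.setInt_annulus (x a b : ℝ) (ha : 0 < a) (hab : a ≤ b) (f : ℝ → ℝ)
    (h1 : IntegrableOn f (Icc (x-b) (x-a))) (h2 : IntegrableOn f (Icc (x+a) (x+b))) :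
    ∫ y in {y : ℝ | a ≤ |x - y| ∧ |x - y| ≤ b}, f y
      = (∫ y in (x-b)..(x-a), f y) + ∫ y in (x+a)..(x+b), f y := by
  rw [HT.annulus_eq x a b ha]
  rw [setIntegral_union ?_ measurableSet_Icc h1 h2]
  · rw [intervalIntegral.integral_of_le (by linarith),
      intervalIntegral.integral_of_le (by linarith),
      ← integral_Icc_eq_integral_Ioc, ← integral_Icc_eq_integral_Ioc]
  · rw [Set.disjoint_left]
    intro y hy hy'
    simp only [mem_Icc] at hy hy'
    linarith [hy.2, hy'.1]

lemma HT.int_left_inv (x a b : ℝ) (ha : 0 < a) (hab : a ≤ b) :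
    ∫ y in (x-b)..(x-a), 1/(x-y) = Real.log (b/a) := by
  have h := intervalIntegral.integral_comp_sub_left (a := x-b) (b := x-a) (fun t => (1:ℝ)/t) x
  simp only [sub_sub_cancel] at h
  rw [h]
  exact integral_one_div (Set.notMem_uIcc_of_lt ha (lt_of_lt_of_le ha hab))

lemma HT.int_right_inv (x a b : ℝ) (ha : 0 < a) (hab : a ≤ b) :
    ∫ y in (x+a)..(x+b), 1/(x-y) = -Real.log (b/a) := by
  have h := intervalIntegral.integral_comp_sub_right (a := x+a) (b := x+b) (fun t => (1:ℝ)/(-t)) x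
  simp only [add_sub_cancel_left, neg_sub] at h
  rw [h, intervalIntegral.integral_congr (g := fun t => -(1/t)) (fun t _ => by
    show (1:ℝ)/(-t) = -(1/t); rw [div_neg]),
    intervalIntegral.integral_neg,
    integral_one_div (Set.notMem_uIcc_of_lt ha (lt_of_lt_of_le ha hab))]

lemma HT.int_left_absinv (x a b : ℝ) (ha : 0 < a) (hab : a ≤ b) :
    ∫ y in (x-b)..(x-a), 1/|x-y| = Real.log (b/a) := by
  rw [intervalIntegral.integral_congr (g := fun y => 1/(x-y)) ?_]
  · exact HT.int_left_inv x a b ha hab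
  · intro y hy
    rw [uIcc_of_le (by linarith)] at hy
    simp only [mem_Icc] at hy
    show (1:ℝ)/|x-y| = 1/(x-y)
    rw [abs_of_nonneg (by linarith [hy.2])]

lemma HT.int_right_absinv (x a b : ℝ) (ha : 0 < a) (hab : a ≤ b) :
    ∫ y in (x+a)..(x+b), 1/|x-y| = Real.log (b/a) := by
  have h := intervalIntegral.integral_comp_sub_right (a := x+a) (b := x+b) (fun t => (1:ℝ)/t) x
  simp only [add_sub_cancel_left] at h
  rw [intervalIntegral.integral_congr (g := fun y => 1/(y-x)) ?_, h]
  · exact integral_one_div (Set.notMem_uIcc_of_lt ha (lt_of_lt_of_le ha hab))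
  · intro y hy
    rw [uIcc_of_le (by linarith)] at hy
    simp only [mem_Icc] at hy
    show (1:ℝ)/|x-y| = 1/(y-x)
    rw [abs_sub_comm, abs_of_nonneg (by linarith [hy.1])]

lemma HT.int_left_rpow (x a b r : ℝ) (ha : 0 < a) (hab : a ≤ b) (hr : -1 < r) :
    ∫ y in (x-b)..(x-a), |x-y| ^ r = (b ^ (r+1) - a ^ (r+1)) / (r+1) := by
  have h := intervalIntegral.integral_comp_sub_left (a := x-b) (b := x-a) (fun t => t ^ r) x
  simp only [sub_sub_cancel] at h
  rw [intervalIntegral.integral_congr (g := fun y => (x-y) ^ r) ?_, h]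
  · exact integral_rpow (Or.inl hr)
  · intro y hy
    rw [uIcc_of_le (by linarith)] at hy
    simp only [mem_Icc] at hy
    show |x-y| ^ r = (x-y) ^ r
    rw [abs_of_nonneg (by linarith [hy.2])]

lemma HT.int_right_rpow (x a b r : ℝ) (ha : 0 < a) (hab : a ≤ b) (hr : -1 < r) :
    ∫ y in (x+a)..(x+b), |x-y| ^ r = (b ^ (r+1) - a ^ (r+1)) / (r+1) := by
  have h := intervalIntegral.integral_comp_sub_right (a := x+a) (b := x+b) (fun t => t ^ r) x
  simp only [add_sub_cancel_left] at h
  rw [intervalIntegral.integral_congr (g := fun y => (y-x) ^ r) ?_, h]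
  · exact integral_rpow (Or.inl hr)
  · intro y hy
    rw [uIcc_of_le (by linarith)] at hy
    simp only [mem_Icc] at hy
    show |x-y| ^ r = (y-x) ^ r
    rw [abs_sub_comm, abs_of_nonneg (by linarith [hy.1])]

lemma HT.meas_annulus (x a b : ℝ) : MeasurableSet {y : ℝ | a ≤ |x - y| ∧ |x - y| ≤ b} := by
  have hg : Measurable fun y : ℝ => |x - y| := by fun_prop
  exact hg measurableSet_Icc

lemma HT.annulus_subset_Icc (x a b : ℝ) :
    {y : ℝ | a ≤ |x - y| ∧ |x - y| ≤ b} ⊆ Icc (x-b) (x+b) := by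
  intro y hy
  obtain ⟨h1, h2⟩ := abs_le.1 hy.2
  exact ⟨by linarith, by linarith⟩

lemma HT.annulus_intOn {x a b M : ℝ} {f : ℝ → ℝ} (hm : Measurable f)
    (hM : ∀ y, a ≤ |x - y| → |f y| ≤ M) :
    IntegrableOn f {y : ℝ | a ≤ |x - y| ∧ |x - y| ≤ b} :=
  HT.intOn_bounded (HT.meas_annulus x a b) (HT.annulus_subset_Icc x a b) hm (fun y hy => hM y hy.1)

lemma HT.inv_bound (x a : ℝ) (ha : 0 < a) : ∀ y : ℝ, a ≤ |x - y| → |1/(x-y)| ≤ 1/a := by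
  intro y hy
  rw [abs_div, abs_one]
  exact one_div_le_one_div_of_le ha hy

lemma HT.annulus_inv_zero (x a b : ℝ) (ha : 0 < a) (hab : a ≤ b) :
    ∫ y in {y : ℝ | a ≤ |x - y| ∧ |x - y| ≤ b}, 1/(x-y) = 0 := by
  have hI : IntegrableOn (fun y => 1/(x-y)) {y : ℝ | a ≤ |x - y| ∧ |x - y| ≤ b} :=
    HT.annulus_intOn (by fun_prop) (HT.inv_bound x a ha)
  rw [HT.setInt_annulus x a b ha hab _
    (hI.mono_set (by rw [HT.annulus_eq x a b ha]; exact subset_union_left))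
    (hI.mono_set (by rw [HT.annulus_eq x a b ha]; exact subset_union_right)),
    HT.int_left_inv x a b ha hab, HT.int_right_inv x a b ha hab]
  ring

lemma HT.annulus_absinv (x a b : ℝ) (ha : 0 < a) (hab : a ≤ b) :
    ∫ y in {y : ℝ | a ≤ |x - y| ∧ |x - y| ≤ b}, 1/|x-y| = 2 * Real.log (b/a) := by
  have hI : IntegrableOn (fun y => 1/|x-y|) {y : ℝ | a ≤ |x - y| ∧ |x - y| ≤ b} :=
    HT.annulus_intOn (by fun_prop) (fun y hy => by
      rw [abs_of_nonneg (by positivity)]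
      exact one_div_le_one_div_of_le ha hy)
  rw [HT.setInt_annulus x a b ha hab _
    (hI.mono_set (by rw [HT.annulus_eq x a b ha]; exact subset_union_left))
    (hI.mono_set (by rw [HT.annulus_eq x a b ha]; exact subset_union_right)),
    HT.int_left_absinv x a b ha hab, HT.int_right_absinv x a b ha hab]
  ring

lemma HT.annulus_rpow (x a b r : ℝ) (ha : 0 < a) (hab : a ≤ b) (hr : -1 < r) (hr0 : r ≤ 0) :
    ∫ y in {y : ℝ | a ≤ |x - y| ∧ |x - y| ≤ b}, |x-y| ^ r
      = 2 * ((b ^ (r+1) - a ^ (r+1)) / (r+1)) := by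
  have hI : IntegrableOn (fun y => |x-y| ^ r) {y : ℝ | a ≤ |x - y| ∧ |x - y| ≤ b} :=
    HT.annulus_intOn (by fun_prop) (fun y hy => by
      rw [abs_of_nonneg (by positivity)]
      exact Real.rpow_le_rpow_of_nonpos ha hy hr0)
  rw [HT.setInt_annulus x a b ha hab _
    (hI.mono_set (by rw [HT.annulus_eq x a b ha]; exact subset_union_left))
    (hI.mono_set (by rw [HT.annulus_eq x a b ha]; exact subset_union_right)),
    HT.int_left_rpow x a b r ha hab hr, HT.int_right_rpow x a b r ha hab hr]
  ring

lemma HT.near_ae (x ε δ : ℝ) (hε : 0 < ε) :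
    {y : ℝ | ε < |x - y| ∧ |x - y| ≤ δ} =ᵐ[volume] {y : ℝ | ε ≤ |x - y| ∧ |x - y| ≤ δ} := by
  rw [ae_eq_set]
  constructor
  · have hsub : {y : ℝ | ε < |x - y| ∧ |x - y| ≤ δ} ⊆ {y : ℝ | ε ≤ |x - y| ∧ |x - y| ≤ δ} :=
      fun y hy => mem_setOf_eq ▸ ⟨hy.1.le, hy.2⟩
    rw [diff_eq_empty.2 hsub]
    exact measure_empty
  · refine measure_mono_null (t := {x - ε, x + ε}) ?_ ?_
    · intro y hy
      obtain ⟨⟨h1, h2⟩, h3⟩ := hy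
      have heq : |x - y| = ε := by
        by_contra hne
        exact h3 ⟨lt_of_le_of_ne h1 (Ne.symm hne), h2⟩
      simp only [mem_insert_iff, mem_singleton_iff]
      rcases (abs_eq hε.le).1 heq with h | h
      · left; linarith
      · right; linarith
    · exact (Set.toFinite {x - ε, x + ε}).measure_zero volume

lemma HT.abs_div_le {w t c a : ℝ} (hw : |w| ≤ c) (ha : 0 < a) (hat : a ≤ |t|) :
    |w/t| ≤ c/a := by
  rw [abs_div]
  exact div_le_div₀ ((abs_nonneg w).trans hw) hw ha hat

set_option maxHeartbeats 1000000 in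
/-- Log-type bound on the principal value Hilbert transform of a bounded,
compactly supported Hölder function. -/
theorem hilbert_transform_log_bound (α : ℝ) (hα : 0 < α) (hα1 : α < 1) :
    ∃ C : ℝ, 0 < C ∧
      ∀ (ω : ℝ → ℝ) (D Hnorm x I : ℝ),
        Measurable ω → 1 ≤ D →
        (∀ y, ω y ≠ 0 → y ∈ Icc (-D) D) →
        (∀ y, |ω y| ≤ 1) →
        0 ≤ Hnorm →
        (∀ a b : ℝ, 0 < |a - b| → |a - b| ≤ 1 → |ω a - ω b| ≤ Hnorm * |a - b| ^ α) →
        Filter.Tendsto (fun ε : ℝ => ∫ y in {y : ℝ | ε < |x - y|}, ω y / (x - y))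
          (nhdsWithin 0 (Ioi 0)) (nhds I) →
        |I| ≤ C * (1 + Real.log D + Real.log (1 + Hnorm)) := by
  refine ⟨6/α, by positivity, ?_⟩
  intro ω D Hnorm x I hmeas hD hsupp hbound hH0 hHol htend
  have hH1 : (1:ℝ) ≤ 1 + Hnorm := by linarith
  set δ : ℝ := (1 + Hnorm) ^ (-(1/α)) with hδdef
  have hδpos : 0 < δ := Real.rpow_pos_of_pos (by linarith) _
  have hδ1 : δ ≤ 1 := Real.rpow_le_one_of_one_le_of_nonpos hH1 (by
    rw [neg_nonpos]; positivity)
  have hδα : Hnorm * δ ^ α ≤ 1 := by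
    have hpow : δ ^ α = (1 + Hnorm)⁻¹ := by
      rw [hδdef, ← Real.rpow_mul (by linarith : (0:ℝ) ≤ 1 + Hnorm),
        show -(1/α) * α = -1 by field_simp, Real.rpow_neg_one]
    rw [hpow, ← div_eq_mul_inv]
    exact div_le_one_of_le₀ (by linarith) (by linarith)
  have hlogδ : Real.log δ = -(1/α) * Real.log (1 + Hnorm) := Real.log_rpow (by linarith) _
  set B : ℝ := 2/α + 2*Real.log 3 + 2*Real.log D + 2/α * Real.log (1+Hnorm) with hB
  -- The key uniform estimate.
  have key : ∀ ε ∈ Ioo (0:ℝ) δ, |∫ y in {y : ℝ | ε < |x - y|}, ω y / (x - y)| ≤ B := by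
    intro ε hε
    obtain ⟨hε0, hεδ⟩ := hε
    set f : ℝ → ℝ := fun y => ω y / (x - y) with hf
    have hfm : Measurable f := hmeas.div (measurable_const.sub measurable_id)
    have hg : Measurable fun y : ℝ => |x - y| := by fun_prop
    set K : Set ℝ := Icc (-D) D with hKdef
    set A : Set ℝ := {y | ε < |x - y| ∧ |x - y| ≤ δ} with hAdef
    set F : Set ℝ := {y | δ < |x - y|} with hFdef
    have hA : MeasurableSet A := hg measurableSet_Ioc
    have hF : MeasurableSet F := hg measurableSet_Ioi
    have hK : MeasurableSet K := measurableSet_Icc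
    have hEAF : {y : ℝ | ε < |x - y|} = A ∪ F := by
      ext y
      simp only [hAdef, hFdef, mem_setOf_eq, mem_union]
      constructor
      · intro h
        rcases le_or_gt |x - y| δ with h' | h'
        · exact Or.inl ⟨h, h'⟩
        · exact Or.inr h'
      · rintro (⟨h, _⟩ | h)
        · exact h
        · exact lt_trans hεδ h
    have hdisj : Disjoint A F := by
      rw [Set.disjoint_left]
      intro y hy hy'
      rw [hAdef, mem_setOf_eq] at hy
      rw [hFdef, mem_setOf_eq] at hy'
      linarith [hy.2]
    have hAsub : A ⊆ Icc (x - δ) (x + δ) := by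
      intro y hy
      rw [hAdef, mem_setOf_eq] at hy
      obtain ⟨h1, h2⟩ := abs_le.1 hy.2
      exact ⟨by linarith, by linarith⟩
    -- Integrability facts
    have hfA : IntegrableOn f A :=
      HT.intOn_bounded hA hAsub hfm (fun y hy => HT.abs_div_le (hbound y) hε0 hy.1.le)
    have hfFK : IntegrableOn f (F ∩ K) :=
      HT.intOn_bounded (hF.inter hK) inter_subset_right hfm
        (fun y hy => HT.abs_div_le (hbound y) hδpos hy.1.le)
    have hzeroFc : ∀ y ∈ F \ K, f y = 0 := by
      intro y hy
      have hω : ω y = 0 := by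
        by_contra h
        exact hy.2 (hsupp y h)
      simp [hf, hω]
    have hfFc : IntegrableOn f (F \ K) := by
      rw [integrableOn_congr_fun hzeroFc (hF.diff hK)]
      exact integrableOn_zero
    have hfF : IntegrableOn f F := by
      rw [show F = (F ∩ K) ∪ (F \ K) from (inter_union_diff F K).symm]
      exact hfFK.union hfFc
    have hdisj2 : Disjoint (F ∩ K) (F \ K) := by
      rw [Set.disjoint_left]
      rintro y ⟨_, hyK⟩ ⟨_, hyK'⟩
      exact hyK' hyK
    -- Split the integral
    have hFint : ∫ y in F, f y = ∫ y in F ∩ K, f y := by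
      conv_lhs => rw [show F = (F ∩ K) ∪ (F \ K) from (inter_union_diff F K).symm]
      rw [setIntegral_union hdisj2 (hF.diff hK) hfFK hfFc,
        setIntegral_eq_zero_of_forall_eq_zero hzeroFc, add_zero]
    have hsplit : ∫ y in {y : ℝ | ε < |x - y|}, f y
        = (∫ y in A, f y) + ∫ y in F ∩ K, f y := by
      rw [hEAF, setIntegral_union hdisj hF hfA hfF, hFint]
    -- Near part
    have hinvA : IntegrableOn (fun y => 1/(x-y)) A :=
      HT.intOn_bounded hA hAsub (by fun_prop) (fun y hy => HT.inv_bound x ε hε0 y hy.1.le)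
    have hg1m : Measurable fun y => (ω y - ω x)/(x - y) :=
      (hmeas.sub measurable_const).div (measurable_const.sub measurable_id)
    have hg1A : IntegrableOn (fun y => (ω y - ω x)/(x - y)) A :=
      HT.intOn_bounded hA hAsub hg1m (fun y hy =>
        HT.abs_div_le (by
          calc |ω y - ω x| ≤ |ω y| + |ω x| := abs_sub _ _
            _ ≤ 2 := by linarith [hbound y, hbound x]) hε0 hy.1.le)
    have hinvA_val : ∫ y in A, 1/(x-y) = 0 := by
      rw [hAdef, setIntegral_congr_set (HT.near_ae x ε δ hε0)]
      exact HT.annulus_inv_zero x ε δ hε0 hεδ.le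
    have hAN : ∫ y in A, f y
        = (∫ y in A, (ω y - ω x)/(x - y)) + ω x * ∫ y in A, 1/(x - y) := by
      rw [setIntegral_congr_fun hA (g := fun y => (ω y - ω x)/(x - y) + ω x * (1/(x - y)))
        (fun y hy => by
          have hxy : x - y ≠ 0 := by
            intro h
            rw [hAdef, mem_setOf_eq, h, abs_zero] at hy
            exact absurd hy.1 (not_lt.2 hε0.le)
          show ω y / (x - y) = (ω y - ω x)/(x - y) + ω x * (1/(x - y))
          field_simp; ring),
        integral_add hg1A (hinvA.const_mul (ω x)), integral_const_mul]
    have hhA : IntegrableOn (fun y => Hnorm * |x - y| ^ (α - 1)) A :=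
      HT.intOn_bounded hA hAsub (by fun_prop) (fun y hy => by
        rw [abs_of_nonneg (by positivity)]
        exact mul_le_mul_of_nonneg_left
          (Real.rpow_le_rpow_of_nonpos hε0 hy.1.le (by linarith)) hH0)
    have hpt : ∀ y ∈ A, |(ω y - ω x)/(x - y)| ≤ Hnorm * |x - y| ^ (α - 1) := by
      intro y hy
      rw [hAdef, mem_setOf_eq] at hy
      have h0 : 0 < |x - y| := lt_trans hε0 hy.1
      have h1' : |x - y| ≤ 1 := hy.2.trans hδ1
      have hh := hHol y x (by rwa [abs_sub_comm]) (by rwa [abs_sub_comm])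
      rw [abs_sub_comm y x] at hh
      rw [abs_div]
      calc |ω y - ω x| / |x - y| ≤ (Hnorm * |x - y| ^ α) / |x - y| := by
            gcongr
        _ = Hnorm * |x - y| ^ (α - 1) := by
            rw [mul_div_assoc, Real.rpow_sub h0, Real.rpow_one]
    have hnear : |∫ y in A, (ω y - ω x)/(x - y)| ≤ 2/α := by
      have h1 : |∫ y in A, (ω y - ω x)/(x - y)| ≤ ∫ y in A, |(ω y - ω x)/(x - y)| := by
        have := MeasureTheory.norm_integral_le_integral_norm (μ := volume.restrict A)
          (fun y => (ω y - ω x)/(x - y))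
        simp only [Real.norm_eq_abs] at this
        exact this
      have h2 : ∫ y in A, |(ω y - ω x)/(x - y)| ≤ ∫ y in A, Hnorm * |x - y| ^ (α - 1) :=
        setIntegral_mono_on hg1A.abs hhA hA hpt
      have h3 : ∫ y in A, Hnorm * |x - y| ^ (α - 1)
          = Hnorm * (2 * ((δ ^ α - ε ^ α)/α)) := by
        rw [hAdef, setIntegral_congr_set (HT.near_ae x ε δ hε0), integral_const_mul,
          HT.annulus_rpow x ε δ (α - 1) hε0 hεδ.le (by linarith) (by linarith)]
        norm_num
      have h4 : Hnorm * (2 * ((δ ^ α - ε ^ α)/α)) ≤ 2/α := by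
        have hεα : 0 ≤ Hnorm * ε ^ α := mul_nonneg hH0 (Real.rpow_nonneg hε0.le α)
        have heq : Hnorm * (2 * ((δ ^ α - ε ^ α)/α))
            = 2/α * (Hnorm * δ ^ α - Hnorm * ε ^ α) := by
          field_simp
        rw [heq]
        calc 2/α * (Hnorm * δ ^ α - Hnorm * ε ^ α) ≤ 2/α * 1 :=
              mul_le_mul_of_nonneg_left (by linarith) (by positivity)
          _ = 2/α := mul_one _
      linarith
    have hnearA : |∫ y in A, f y| ≤ 2/α := by
      rw [hAN, hinvA_val, mul_zero, add_zero]
      exact hnear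
    -- Far part
    set r : ℝ := max δ (|x| - D) with hrdef
    set R : ℝ := r + 2*D with hRdef
    have hr0 : 0 < r := lt_of_lt_of_le hδpos (le_max_left _ _)
    have hDpos : (0:ℝ) < D := lt_of_lt_of_le one_pos hD
    have hrR : r ≤ R := by rw [hRdef]; linarith
    have hsubAnn : F ∩ K ⊆ {y : ℝ | r ≤ |x - y| ∧ |x - y| ≤ R} := by
      rintro y ⟨hyF, hyK⟩
      rw [hFdef, mem_setOf_eq] at hyF
      have hy1 : |y| ≤ D := abs_le.2 (mem_Icc.1 hyK)
      have habs1 : |x| - |y| ≤ |x - y| := abs_sub_abs_le_abs_sub x y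
      have habs2 : |x - y| ≤ |x| + |y| := by
        calc |x - y| = |x + (-y)| := by ring_nf
          _ ≤ |x| + |(-y)| := abs_add_le x (-y)
          _ = |x| + |y| := by rw [abs_neg]
      have hxr : |x| - D ≤ r := le_max_right _ _
      constructor
      · exact max_le hyF.le (by linarith)
      · rw [hRdef]; show |x - y| ≤ r + 2*D; linarith
    have hgAnn : IntegrableOn (fun y => 1/|x - y|) {y : ℝ | r ≤ |x - y| ∧ |x - y| ≤ R} :=
      HT.annulus_intOn (by fun_prop) (fun y hy => by
        rw [abs_of_nonneg (by positivity)]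
        exact one_div_le_one_div_of_le hr0 hy)
    have hfar : |∫ y in F ∩ K, f y| ≤ 2 * Real.log (R/r) := by
      have h1 : |∫ y in F ∩ K, f y| ≤ ∫ y in F ∩ K, |f y| := by
        have := MeasureTheory.norm_integral_le_integral_norm (μ := volume.restrict (F ∩ K)) f
        simp only [Real.norm_eq_abs] at this
        exact this
      have h2 : ∫ y in F ∩ K, |f y| ≤ ∫ y in F ∩ K, 1/|x - y| := by
        apply setIntegral_mono_on hfFK.abs
          (HT.intOn_bounded (hF.inter hK) inter_subset_right (by fun_prop)
            (fun y hy => by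
              rw [abs_of_nonneg (by positivity)]
              exact one_div_le_one_div_of_le hδpos hy.1.le))
          (hF.inter hK)
        intro y hy
        have h0 : 0 < |x - y| := lt_trans hδpos hy.1
        rw [hf]
        show |ω y / (x - y)| ≤ 1/|x - y|
        rw [abs_div]
        exact div_le_div₀ zero_le_one (hbound y) h0 le_rfl
      have h3 : ∫ y in F ∩ K, 1/|x - y|
          ≤ ∫ y in {y : ℝ | r ≤ |x - y| ∧ |x - y| ≤ R}, 1/|x - y| :=
        setIntegral_mono_set hgAnn
          (Filter.Eventually.of_forall (fun y => by positivity))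
          (HasSubset.Subset.eventuallyLE hsubAnn)
      have h4 : ∫ y in {y : ℝ | r ≤ |x - y| ∧ |x - y| ≤ R}, 1/|x - y|
          = 2 * Real.log (R/r) := HT.annulus_absinv x r R hr0 hrR
      linarith
    have hlogbound : Real.log (R/r) ≤ Real.log 3 + Real.log D + 1/α * Real.log (1 + Hnorm) := by
      have hδr : δ ≤ r := le_max_left _ _
      have h3 : R/r ≤ 3*D/δ := by
        rw [div_le_div_iff₀ hr0 hδpos, hRdef]
        nlinarith [hδ1, hD, hδr, hr0, hδpos]
      have hlog1 : Real.log (R/r) ≤ Real.log (3*D/δ) :=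
        Real.log_le_log (by positivity) h3
      have hlog2 : Real.log (3*D/δ) = Real.log 3 + Real.log D - Real.log δ := by
        rw [Real.log_div (by positivity) hδpos.ne', Real.log_mul (by norm_num) hDpos.ne']
      rw [hlog2, hlogδ] at hlog1
      linarith
    -- Combine
    calc |∫ y in {y : ℝ | ε < |x - y|}, f y|
        = |(∫ y in A, f y) + ∫ y in F ∩ K, f y| := by rw [hsplit]
      _ ≤ |∫ y in A, f y| + |∫ y in F ∩ K, f y| := abs_add_le _ _
      _ ≤ 2/α + 2 * Real.log (R/r) := add_le_add hnearA hfar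
      _ ≤ 2/α + 2 * (Real.log 3 + Real.log D + 1/α * Real.log (1 + Hnorm)) := by
          linarith
      _ = B := by rw [hB]; ring
  -- Take the limit
  have hIB : |I| ≤ B :=
    le_of_tendsto htend.abs
      (Filter.eventually_of_mem (Ioo_mem_nhdsGT_of_mem ⟨le_refl 0, hδpos⟩) key)
  -- Final arithmetic
  have hlogD : 0 ≤ Real.log D := Real.log_nonneg hD
  have hlogH : 0 ≤ Real.log (1 + Hnorm) := Real.log_nonneg hH1
  have hlog3 : Real.log 3 ≤ 2 := by
    have := Real.log_le_sub_one_of_pos (by norm_num : (0:ℝ) < 3)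
    linarith
  have hαle : 2 ≤ 2/α := by
    rw [le_div_iff₀ hα]
    nlinarith
  have hfinal : B ≤ 6/α * (1 + Real.log D + Real.log (1 + Hnorm)) := by
    rw [hB]
    have h6 : (2:ℝ) ≤ 6/α := by
      rw [le_div_iff₀ hα]; nlinarith
    have h1 : 2 * Real.log D ≤ 6/α * Real.log D :=
      mul_le_mul_of_nonneg_right h6 hlogD
    have h2 : 2/α * Real.log (1 + Hnorm) ≤ 6/α * Real.log (1 + Hnorm) := by
      apply mul_le_mul_of_nonneg_right _ hlogH
      rw [div_le_div_iff₀ hα hα]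
      nlinarith
    have h3 : 2/α + 2 * Real.log 3 ≤ 6/α := by
      have h4 : (4:ℝ) ≤ 4/α := by
        rw [le_div_iff₀ hα]; nlinarith
      have h5 : 2/α + 4/α = 6/α := by ring
      linarith
    have expand : 6/α * (1 + Real.log D + Real.log (1 + Hnorm))
        = 6/α + 6/α * Real.log D + 6/α * Real.log (1 + Hnorm) := by ring
    rw [expand]
    linarith
  exact le_trans hIB hfinal
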